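/- Convolution identity for divided differences of the exponential: for real β > 0 and points x₀,...,x_q (0 ≤ j < q), ∫₀^β e^{−τ[x_{j+1},...,x_q]} · e^{−(β−τ)[x₀,...,x_j]} dτ = −e^{−β[x₀,...,x_q]}, where e^{−t[y₀,...,y_m]} denotes the divided difference of x ↦ e^{−tx} over the points y_i. -/

import Mathlib

/-- Complete homogeneous symmetric polynomial of degree `m` evaluated on a list. -/
noncomputable def hSym (m : ℕ) (xs : List ℂ) : ℂ :=
  ∑ k ∈ Finset.Nat.antidiagonalTuple xs.length m, ∏ i : Fin xs.length, xs.get i ^ k i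

/-- Divided difference of an entire function over a list of points (multisets allowed),
via the series `f[x₀,...,x_q] = Σ_m f^{(q+m)}(0)/(q+m)! · h_m(x₀,...,x_q)`. -/
noncomputable def divDiff (f : ℂ → ℂ) (xs : List ℂ) : ℂ :=
  ∑' m : ℕ, iteratedDeriv (xs.length - 1 + m) f 0 /
    (Nat.factorial (xs.length - 1 + m) : ℂ) * hSym m xs

/-- Divided difference of the exponential `x ↦ exp (t * x)` over a list of points. -/
noncomputable def expDD (t : ℂ) (xs : List ℂ) : ℂ :=
  divDiff (fun z => Complex.exp (t * z)) xs

open Finset MeasureTheory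

/-! ### Combinatorial lemmas about `hSym` -/

lemma hSym_cons (a : ℂ) (xs : List ℂ) (m : ℕ) :
    hSym m (a :: xs) = ∑ p ∈ antidiagonal m, a ^ p.1 * hSym p.2 xs := by
  unfold hSym
  simp only [mul_sum, List.length_cons]
  rw [sum_sigma']
  refine Finset.sum_nbij'
      (i := fun k => (⟨(k 0, ∑ i, k (Fin.succ i)), Fin.tail k⟩ : Σ _ : ℕ × ℕ, Fin xs.length → ℕ))
      (j := fun p => Fin.cons p.1.1 p.2) ?_ ?_ ?_ ?_ ?_
  · intro k hk
    simp only [Finset.Nat.mem_antidiagonalTuple] at hk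
    simp only [mem_sigma, Finset.HasAntidiagonal.mem_antidiagonal, Finset.Nat.mem_antidiagonalTuple]
    exact ⟨by rw [← hk, Fin.sum_univ_succ], rfl⟩
  · rintro ⟨⟨p1, p2⟩, g⟩ h
    simp only [mem_sigma, Finset.HasAntidiagonal.mem_antidiagonal, Finset.Nat.mem_antidiagonalTuple] at h ⊢
    rw [Fin.sum_cons, h.2, h.1]
  · intro k hk
    simp [Fin.cons_self_tail]
  · rintro ⟨⟨p1, p2⟩, g⟩ h
    simp only [mem_sigma, Finset.mem_antidiagonal, Finset.Nat.mem_antidiagonalTuple] at h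
    simp [Fin.tail_cons, h.2]
  · intro k hk
    rw [Fin.prod_univ_succ]
    simp [Fin.tail]

lemma hSym_nil (m : ℕ) : hSym m [] = if m = 0 then 1 else 0 := by
  unfold hSym
  cases m with
  | zero => simp
  | succ k => simp

noncomputable def hPS (xs : List ℂ) : PowerSeries ℂ := PowerSeries.mk fun m => hSym m xs

lemma hPS_nil : hPS [] = 1 := by
  ext n
  rw [hPS, PowerSeries.coeff_mk, hSym_nil, PowerSeries.coeff_one]

lemma hPS_cons (a : ℂ) (xs : List ℂ) :
    hPS (a :: xs) = (PowerSeries.mk fun k => a ^ k) * hPS xs := by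
  ext n
  rw [hPS, PowerSeries.coeff_mk, hSym_cons, PowerSeries.coeff_mul]
  simp [hPS]

lemma hPS_append (L R : List ℂ) : hPS (L ++ R) = hPS L * hPS R := by
  induction L with
  | nil => simp [hPS_nil]
  | cons a L ih => rw [List.cons_append, hPS_cons, ih, hPS_cons, mul_assoc]

lemma hSym_append (L R : List ℂ) (p : ℕ) :
    hSym p (L ++ R) = ∑ kl ∈ antidiagonal p, hSym kl.1 L * hSym kl.2 R := by
  have := congrArg (PowerSeries.coeff (R := ℂ) p) (hPS_append L R)
  rw [hPS, PowerSeries.coeff_mk, PowerSeries.coeff_mul] at this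
  simpa [hPS] using this

/-! ### Norm bounds and summability -/

noncomputable def Mx (xs : List ℂ) : ℝ := 1 + (xs.map norm).sum

lemma one_le_Mx (xs : List ℂ) : 1 ≤ Mx xs := by
  have : 0 ≤ (xs.map norm).sum :=
    List.sum_nonneg (fun a ha => by rcases List.mem_map.mp ha with ⟨z, _, rfl⟩; positivity)
  unfold Mx; linarith

lemma get_le_Mx (xs : List ℂ) (i : Fin xs.length) : ‖xs.get i‖ ≤ Mx xs := by
  have hmem : xs.get i ∈ xs := xs.get_mem i
  have h : ‖xs.get i‖ ∈ xs.map norm := List.mem_map_of_mem hmem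
  have := List.single_le_sum (l := xs.map norm)
    (fun a ha => by rcases List.mem_map.mp ha with ⟨z, _, rfl⟩; positivity) _ h
  unfold Mx; linarith

lemma hSym_norm_le (m : ℕ) (xs : List ℂ) :
    ‖hSym m xs‖ ≤ (m + 1) ^ xs.length * Mx xs ^ m := by
  have hM1 := one_le_Mx xs
  have hM0 : 0 ≤ Mx xs := by linarith
  calc ‖hSym m xs‖ ≤ ∑ k ∈ Finset.Nat.antidiagonalTuple xs.length m,
        ‖∏ i : Fin xs.length, xs.get i ^ k i‖ := norm_sum_le _ _
    _ ≤ ∑ k ∈ Finset.Nat.antidiagonalTuple xs.length m, Mx xs ^ m := by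
        refine sum_le_sum fun k hk => ?_
        rw [norm_prod]
        calc ∏ i, ‖xs.get i ^ k i‖ ≤ ∏ i, Mx xs ^ k i := by
              refine prod_le_prod (fun i _ => by positivity) fun i _ => ?_
              rw [norm_pow]
              exact pow_le_pow_left₀ (norm_nonneg _) (get_le_Mx xs i) _
          _ = Mx xs ^ ∑ i, k i := by rw [← Finset.prod_pow_eq_pow_sum]
          _ = Mx xs ^ m := by rw [Finset.Nat.mem_antidiagonalTuple.mp hk]
    _ = (Finset.Nat.antidiagonalTuple xs.length m).card * Mx xs ^ m := by
        rw [sum_const, nsmul_eq_mul]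
    _ ≤ (m + 1) ^ xs.length * Mx xs ^ m := by
        refine mul_le_mul_of_nonneg_right ?_ (by positivity)
        have hcard : (Finset.Nat.antidiagonalTuple xs.length m).card ≤ (m + 1) ^ xs.length := by
          have hsub : Finset.Nat.antidiagonalTuple xs.length m ⊆
              Fintype.piFinset fun _ : Fin xs.length => Finset.range (m + 1) := by
            intro k hk
            rw [Finset.Nat.mem_antidiagonalTuple] at hk
            rw [Fintype.mem_piFinset]
            intro i
            rw [Finset.mem_range, Nat.lt_succ_iff, ← hk]
            exact Finset.single_le_sum (fun _ _ => Nat.zero_le _) (mem_univ i)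
          calc _ ≤ (Fintype.piFinset fun _ : Fin xs.length => Finset.range (m + 1)).card :=
                card_le_card hsub
            _ = (m + 1) ^ xs.length := by simp [Fintype.card_piFinset]
        calc ((Finset.Nat.antidiagonalTuple xs.length m).card : ℝ)
            ≤ ((m + 1) ^ xs.length : ℕ) := by exact_mod_cast hcard
          _ = _ := by push_cast; ring

noncomputable def eTerm (t : ℂ) (xs : List ℂ) (m : ℕ) : ℂ :=
  t ^ (xs.length - 1 + m) / ((xs.length - 1 + m).factorial : ℂ) * hSym m xs

lemma expDD_eq_tsum (t : ℂ) (xs : List ℂ) : expDD t xs = ∑' m, eTerm t xs m := by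
  unfold expDD divDiff eTerm
  congr 1
  funext m
  rw [iteratedDeriv_cexp_const_mul]
  simp [Complex.exp_zero]

noncomputable def bnd (r : ℝ) (xs : List ℂ) (m : ℕ) : ℝ :=
  r ^ (xs.length - 1 + m) / ((xs.length - 1 + m).factorial : ℝ) * ((m + 1) ^ xs.length * Mx xs ^ m)

lemma bnd_nonneg {r : ℝ} (hr : 0 ≤ r) (xs : List ℂ) (m : ℕ) : 0 ≤ bnd r xs m := by
  have hM1 := one_le_Mx xs
  have hM0 : 0 ≤ Mx xs := by linarith
  unfold bnd; positivity

lemma eTerm_norm_le (t : ℂ) (xs : List ℂ) (m : ℕ) {r : ℝ} (hr : ‖t‖ ≤ r) :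
    ‖eTerm t xs m‖ ≤ bnd r xs m := by
  have h0 : (0:ℝ) ≤ r := le_trans (norm_nonneg _) hr
  unfold eTerm bnd
  rw [norm_mul, norm_div, norm_pow]
  have h1 : ‖((xs.length - 1 + m).factorial : ℂ)‖ = ((xs.length - 1 + m).factorial : ℝ) := by
    rw [Complex.norm_natCast]
  rw [h1]
  refine mul_le_mul ?_ (hSym_norm_le m xs) (norm_nonneg _) (by positivity)
  gcongr

lemma bnd_summable (r : ℝ) (hr : 0 ≤ r) (xs : List ℂ) : Summable (bnd r xs) := by
  have hM1 := one_le_Mx xs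
  have hM0 : (0:ℝ) ≤ Mx xs := by linarith
  set c := xs.length - 1 with hc
  set L := xs.length with hL
  have h1 : ∀ m, 0 ≤ bnd r xs m := fun m => bnd_nonneg hr xs m
  have hsum : Summable (fun m => r ^ c * ((2 ^ L * r * Mx xs) ^ m / m.factorial)) :=
    (Real.summable_pow_div_factorial _).mul_left _
  refine Summable.of_nonneg_of_le h1 (fun m => ?_) hsum
  unfold bnd
  have key1 : r ^ (c + m) / ((c + m).factorial : ℝ) ≤ r ^ c * r ^ m / m.factorial := by
    rw [pow_add]
    gcongr
    all_goals
      first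
        | positivity
        | omega
  have h2 : ((m : ℝ) + 1) ^ L ≤ ((2:ℝ) ^ L) ^ m := by
    have hm : ((m:ℝ) + 1) ≤ (2:ℝ) ^ m := by exact_mod_cast (Nat.lt_two_pow_self (n := m))
    calc ((m:ℝ)+1) ^ L ≤ ((2:ℝ) ^ m) ^ L := pow_le_pow_left₀ (by positivity) hm L
      _ = ((2:ℝ) ^ L) ^ m := by rw [← pow_mul, ← pow_mul, Nat.mul_comm]
  calc r ^ (c + m) / ((c + m).factorial : ℝ) * (((m:ℝ) + 1) ^ L * Mx xs ^ m)
      ≤ (r ^ c * r ^ m / m.factorial) * (((2:ℝ) ^ L) ^ m * Mx xs ^ m) := by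
        refine mul_le_mul key1 (mul_le_mul_of_nonneg_right h2 (by positivity))
          (by positivity) (by positivity)
    _ = r ^ c * ((2 ^ L * r * Mx xs) ^ m / m.factorial) := by
        rw [mul_pow, mul_pow]; ring

lemma eTerm_norm_summable (t : ℂ) (xs : List ℂ) : Summable fun m => ‖eTerm t xs m‖ :=
  Summable.of_nonneg_of_le (fun _ => norm_nonneg _) (fun m => eTerm_norm_le t xs m le_rfl)
    (bnd_summable ‖t‖ (norm_nonneg t) xs)

/-! ### Beta integral -/

lemma betaIntegral_nat (a b : ℕ) :
    Complex.betaIntegral (a + 1) (b + 1)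
      = (a.factorial * b.factorial : ℂ) / ((a + b + 1).factorial : ℂ) := by
  have ha : 0 < Complex.re (a + 1) := by simp; positivity
  have hb : 0 < Complex.re (b + 1) := by simp; positivity
  have h := Complex.Gamma_mul_Gamma_eq_betaIntegral ha hb
  have hsum : ((a : ℂ) + 1) + ((b : ℂ) + 1) = ((a + b + 1 : ℕ) : ℂ) + 1 := by push_cast; ring
  rw [hsum] at h
  rw [Complex.Gamma_nat_eq_factorial, Complex.Gamma_nat_eq_factorial,
    Complex.Gamma_nat_eq_factorial] at h
  have hne : ((a + b + 1).factorial : ℂ) ≠ 0 :=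
    Nat.cast_ne_zero.mpr (Nat.factorial_ne_zero _)
  field_simp at h ⊢
  rw [h]

lemma beta_nat_integral (β : ℝ) (hβ : 0 < β) (a b : ℕ) :
    ∫ τ in (0:ℝ)..β, (τ : ℂ) ^ a * ((β : ℂ) - (τ : ℂ)) ^ b
      = (β : ℂ) ^ (a + b + 1) * (a.factorial * b.factorial : ℂ)
          / ((a + b + 1).factorial : ℂ) := by
  have h := Complex.betaIntegral_scaled (a + 1) (b + 1) hβ
  have h1 : ∀ z : ℂ, z ^ (((a : ℂ) + 1) - 1) = z ^ a := by
    intro z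
    rw [add_sub_cancel_right, Complex.cpow_natCast]
  have h2 : ∀ z : ℂ, z ^ (((b : ℂ) + 1) - 1) = z ^ b := by
    intro z
    rw [add_sub_cancel_right, Complex.cpow_natCast]
  simp only [h1, h2] at h
  have h3 : ((a : ℂ) + 1) + ((b : ℂ) + 1) - 1 = ((a + b + 1 : ℕ) : ℂ) := by push_cast; ring
  rw [h3, Complex.cpow_natCast, betaIntegral_nat] at h
  rw [h]; ring

/-! ### tsum regrouping -/

lemma tsum_prod_antidiagonal {g : ℕ × ℕ → ℂ} (h : Summable g) :
    ∑' i : ℕ × ℕ, g i = ∑' p, ∑ kl ∈ Finset.HasAntidiagonal.antidiagonal p, g kl := by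
  rw [← Finset.HasAntidiagonal.sigmaAntidiagonalEquivProd.tsum_eq g]
  have hs : Summable fun c : (Σ n : ℕ, {x // x ∈ antidiagonal n}) =>
      g (Finset.HasAntidiagonal.sigmaAntidiagonalEquivProd c) :=
    Finset.HasAntidiagonal.sigmaAntidiagonalEquivProd.summable_iff.mpr h
  rw [hs.tsum_sigma' (fun n => (hasSum_fintype _).summable)]
  refine tsum_congr fun p => ?_
  rw [tsum_fintype]
  exact Finset.sum_coe_sort (Finset.HasAntidiagonal.antidiagonal p) g

/-! ### The main convolution lemma, in abstract form -/

lemma expDD_convolution_aux (β : ℝ) (hβ : 0 < β) (d jn : ℕ) (L R : List ℂ)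
    (hL : L.length = jn + 1) (hR : R.length = d + 1) :
    ∫ τ in (0:ℝ)..β, expDD (-(τ:ℂ)) R * expDD (-((β:ℂ) - (τ:ℂ))) L
      = - expDD (-(β:ℂ)) (L ++ R) := by
  set F : ℕ × ℕ → ℝ → ℂ :=
    fun i τ => eTerm (-(τ:ℂ)) R i.1 * eTerm (-((β:ℂ) - (τ:ℂ))) L i.2 with hF
  -- pointwise Cauchy product
  have hpt : ∀ τ : ℝ, expDD (-(τ:ℂ)) R * expDD (-((β:ℂ) - (τ:ℂ))) L = ∑' i : ℕ × ℕ, F i τ := by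
    intro τ
    rw [expDD_eq_tsum, expDD_eq_tsum]
    exact tsum_mul_tsum_of_summable_norm (eTerm_norm_summable _ _) (eTerm_norm_summable _ _)
  -- continuity and integrability
  have hcont : ∀ i : ℕ × ℕ, Continuous (F i) := by
    intro i
    simp only [hF, eTerm]
    fun_prop
  have hint : ∀ i : ℕ × ℕ, IntegrableOn (F i) (Set.Ioc 0 β) :=
    fun i => (hcont i).integrableOn_Ioc
  -- uniform bound
  have hbound : ∀ i : ℕ × ℕ, ∀ τ ∈ Set.Ioc (0:ℝ) β, ‖F i τ‖ ≤ bnd β R i.1 * bnd β L i.2 := by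
    intro i τ hτ
    rw [hF, norm_mul]
    refine mul_le_mul (eTerm_norm_le _ _ _ ?_) (eTerm_norm_le _ _ _ ?_) (norm_nonneg _)
      (bnd_nonneg hβ.le R i.1)
    · rw [norm_neg, Complex.norm_real, Real.norm_eq_abs, abs_of_nonneg hτ.1.le]
      exact hτ.2
    · have : (β:ℂ) - (τ:ℂ) = ((β - τ : ℝ) : ℂ) := by push_cast; ring
      rw [norm_neg, this, Complex.norm_real, Real.norm_eq_abs,
        abs_of_nonneg (by linarith [hτ.2])]
      linarith [hτ.1]
  -- summability of integrals of norms
  have hprodsum : Summable fun i : ℕ × ℕ => bnd β R i.1 * bnd β L i.2 :=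
    (bnd_summable β hβ.le R).mul_of_nonneg (bnd_summable β hβ.le L)
      (fun m => bnd_nonneg hβ.le R m) (fun m => bnd_nonneg hβ.le L m)
  have hsumint : Summable fun i : ℕ × ℕ => ∫ τ in Set.Ioc (0:ℝ) β, ‖F i τ‖ := by
    refine Summable.of_nonneg_of_le
      (fun i => integral_nonneg fun τ => norm_nonneg _) (fun i => ?_)
      (hprodsum.mul_right β)
    have hmeas : volume (Set.Ioc (0:ℝ) β) < ⊤ := measure_Ioc_lt_top
    have key : ‖∫ τ in Set.Ioc (0:ℝ) β, ‖F i τ‖‖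
        ≤ (bnd β R i.1 * bnd β L i.2) * (volume (Set.Ioc (0:ℝ) β)).toReal := by
      refine norm_setIntegral_le_of_norm_le_const hmeas fun τ hτ => ?_
      rw [Real.norm_eq_abs, abs_of_nonneg (norm_nonneg _)]
      exact hbound i τ hτ
    rw [Real.norm_eq_abs, abs_of_nonneg (integral_nonneg fun τ => norm_nonneg _)] at key
    calc ∫ τ in Set.Ioc (0:ℝ) β, ‖F i τ‖
        ≤ (bnd β R i.1 * bnd β L i.2) * (volume (Set.Ioc (0:ℝ) β)).toReal := key
      _ = bnd β R i.1 * bnd β L i.2 * β := by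
          rw [Real.volume_Ioc, sub_zero, ENNReal.toReal_ofReal hβ.le]
  -- swap integral and sum
  have hswap := MeasureTheory.hasSum_integral_of_summable_integral_norm
    (μ := volume.restrict (Set.Ioc (0:ℝ) β)) hint hsumint
  have hLHS : ∫ τ in (0:ℝ)..β, expDD (-(τ:ℂ)) R * expDD (-((β:ℂ) - (τ:ℂ))) L
      = ∑' i : ℕ × ℕ, ∫ τ in Set.Ioc (0:ℝ) β, F i τ := by
    rw [intervalIntegral.integral_of_le hβ.le]
    simp only [hpt]
    exact hswap.tsum_eq.symm
  rw [hLHS]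
  -- compute each integral
  have hval : ∀ i : ℕ × ℕ, (∫ τ in Set.Ioc (0:ℝ) β, F i τ)
      = (-1 : ℂ) ^ (jn + d + (i.1 + i.2)) * (hSym i.1 R * hSym i.2 L)
          * (β : ℂ) ^ (jn + d + 1 + (i.1 + i.2)) / ((jn + d + 1 + (i.1 + i.2)).factorial : ℂ) := by
    rintro ⟨m, n⟩
    have ha : R.length - 1 + m = d + m := by omega
    have hb : L.length - 1 + n = jn + n := by omega
    have hfτ : ∀ τ : ℝ, F (m, n) τ
        = ((-1 : ℂ) ^ (d + m) * (-1 : ℂ) ^ (jn + n) * hSym m R * hSym n L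
            / (((d + m).factorial : ℂ) * ((jn + n).factorial : ℂ)))
          * ((τ : ℂ) ^ (d + m) * ((β : ℂ) - (τ : ℂ)) ^ (jn + n)) := by
      intro τ
      simp only [hF, eTerm, ha, hb]
      rw [neg_pow ((τ:ℂ)), neg_pow ((β:ℂ) - (τ:ℂ))]
      ring
    rw [← intervalIntegral.integral_of_le hβ.le]
    rw [intervalIntegral.integral_congr (g := fun τ : ℝ =>
        ((-1 : ℂ) ^ (d + m) * (-1 : ℂ) ^ (jn + n) * hSym m R * hSym n L
            / (((d + m).factorial : ℂ) * ((jn + n).factorial : ℂ)))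
          * ((τ : ℂ) ^ (d + m) * ((β : ℂ) - (τ : ℂ)) ^ (jn + n)))
      (fun τ _ => hfτ τ)]
    rw [intervalIntegral.integral_const_mul, beta_nat_integral β hβ]
    have hfac1 : (((d + m).factorial : ℂ)) ≠ 0 := Nat.cast_ne_zero.mpr (Nat.factorial_ne_zero _)
    have hfac2 : (((jn + n).factorial : ℂ)) ≠ 0 := Nat.cast_ne_zero.mpr (Nat.factorial_ne_zero _)
    have he1 : d + m + (jn + n) + 1 = jn + d + 1 + (m + n) := by omega
    have he2 : (-1 : ℂ) ^ (d + m) * (-1 : ℂ) ^ (jn + n) = (-1 : ℂ) ^ (jn + d + (m + n)) := by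
      rw [← pow_add]
      congr 1
      omega
    rw [he1]
    have hq : (((d + m).factorial : ℂ) * ((jn + n).factorial : ℂ)) ≠ 0 :=
      mul_ne_zero hfac1 hfac2
    rw [div_mul_div_comm]
    have hnum : ((-1:ℂ) ^ (d + m) * (-1:ℂ) ^ (jn + n) * hSym m R * hSym n L) *
        ((β:ℂ) ^ (jn + d + 1 + (m + n)) * (((d + m).factorial : ℂ) * ((jn + n).factorial : ℂ)))
        = (((d + m).factorial : ℂ) * ((jn + n).factorial : ℂ)) *
          ((-1:ℂ) ^ (jn + d + (m + n)) * (hSym m R * hSym n L)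
            * (β:ℂ) ^ (jn + d + 1 + (m + n))) := by
      rw [← he2]; ring
    rw [hnum, mul_div_mul_left _ _ hq]
  have hgsum : Summable (fun i : ℕ × ℕ =>
      (-1 : ℂ) ^ (jn + d + (i.1 + i.2)) * (hSym i.1 R * hSym i.2 L)
          * (β : ℂ) ^ (jn + d + 1 + (i.1 + i.2))
          / ((jn + d + 1 + (i.1 + i.2)).factorial : ℂ)) := by
    have := hswap.summable
    simpa only [hval] using this
  simp only [hval]
  rw [tsum_prod_antidiagonal hgsum]
  rw [expDD_eq_tsum, ← tsum_neg]
  refine tsum_congr fun p => ?_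
  have hlen : (L ++ R).length - 1 + p = jn + d + 1 + p := by
    rw [List.length_append, hL, hR]; omega
  calc ∑ kl ∈ antidiagonal p,
        (-1 : ℂ) ^ (jn + d + (kl.1 + kl.2)) * (hSym kl.1 R * hSym kl.2 L)
          * (β : ℂ) ^ (jn + d + 1 + (kl.1 + kl.2)) / ((jn + d + 1 + (kl.1 + kl.2)).factorial : ℂ)
      = ∑ kl ∈ antidiagonal p,
        ((-1 : ℂ) ^ (jn + d + p) * (β : ℂ) ^ (jn + d + 1 + p)
            / ((jn + d + 1 + p).factorial : ℂ)) * (hSym kl.1 R * hSym kl.2 L) := by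
        refine Finset.sum_congr rfl fun kl hkl => ?_
        rw [Finset.HasAntidiagonal.mem_antidiagonal] at hkl
        rw [hkl]
        ring
    _ = ((-1 : ℂ) ^ (jn + d + p) * (β : ℂ) ^ (jn + d + 1 + p)
            / ((jn + d + 1 + p).factorial : ℂ))
          * ∑ kl ∈ antidiagonal p, hSym kl.1 R * hSym kl.2 L := by rw [Finset.mul_sum]
    _ = ((-1 : ℂ) ^ (jn + d + p) * (β : ℂ) ^ (jn + d + 1 + p)
            / ((jn + d + 1 + p).factorial : ℂ)) * hSym p (L ++ R) := by
        congr 1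
        rw [hSym_append]
        refine Finset.sum_equiv (Equiv.prodComm ℕ ℕ) (fun kl => ?_) (fun kl _ => ?_)
        · simp only [Finset.HasAntidiagonal.mem_antidiagonal, Equiv.prodComm_apply, Prod.fst_swap, Prod.snd_swap]
          omega
        · exact mul_comm _ _
    _ = -(eTerm (-(β:ℂ)) (L ++ R) p) := by
        rw [eTerm, hlen, neg_pow ((β:ℂ))]
        have hsgn : (-1 : ℂ) ^ (jn + d + 1 + p) = -(-1 : ℂ) ^ (jn + d + p) := by
          rw [show jn + d + 1 + p = (jn + d + p) + 1 from by omega, pow_succ]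
          ring
        rw [hsgn]
        ring

/-- Convolution identity for divided differences of the exponential:
`∫₀^β e^{−τ[x_{j+1},...,x_q]} e^{−(β−τ)[x₀,...,x_j]} dτ = −e^{−β[x₀,...,x_q]}`. -/
theorem expDD_convolution (β : ℝ) (hβ : 0 < β) (q j : ℕ) (hj : j < q)
    (x : Fin (q + 1) → ℂ) :
    ∫ τ in (0:ℝ)..β,
        expDD (-(τ : ℂ)) (List.ofFn fun i : Fin (q - j) =>
          x ⟨j + 1 + i.val, by have := i.isLt; omega⟩) *
        expDD (-((β : ℂ) - (τ : ℂ))) (List.ofFn fun i : Fin (j + 1) =>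
          x ⟨i.val, by have := i.isLt; omega⟩)
      = - expDD (-(β : ℂ)) (List.ofFn x) := by
  have hsplit : List.ofFn x
      = (List.ofFn fun i : Fin (j + 1) => x ⟨i.val, by have := i.isLt; omega⟩)
        ++ (List.ofFn fun i : Fin (q - j) => x ⟨j + 1 + i.val, by have := i.isLt; omega⟩) := by
    apply List.ext_getElem
    · simp; omega
    · intro i h1 h2
      rw [List.getElem_ofFn, List.getElem_append]
      split_ifs with hcase
      · rw [List.getElem_ofFn]
      · rw [List.getElem_ofFn]
        congr 1
        apply Fin.ext
        simp only [List.length_ofFn] at hcase ⊢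
        omega
  rw [hsplit]
  exact expDD_convolution_aux β hβ (q - j - 1) j _ _ (by simp)
    (by simp only [List.length_ofFn]; omega)
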